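/- Let G be a (P_2 + 3P_1)-free graph containing two non-adjacent vertices u and v. Then the induced subgraph on the set C of vertices non-adjacent to both u and v is a complete multipartite graph. -/

import Mathlib

open SimpleGraph

/-- `G` is `H`-free: there is no graph embedding of `H` into `G`. -/
def HFree {V W : Type*} (G : SimpleGraph V) (H : SimpleGraph W) : Prop :=
  IsEmpty (H ↪g G)

/-- The graph `P₂ + 3P₁`: the disjoint union of an edge and three isolated vertices. -/
def P2Plus3P1 : SimpleGraph (Fin 2 ⊕ Fin 3) := pathGraph 2 ⊕g (⊥ : SimpleGraph (Fin 3))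

private lemma p2_01 : P2Plus3P1.Adj (Sum.inl 0) (Sum.inl 1) := by
  simp [P2Plus3P1, pathGraph_adj]

private lemma p2_10 : P2Plus3P1.Adj (Sum.inl 1) (Sum.inl 0) := p2_01.symm

set_option maxHeartbeats 1600000 in
/-- In a `(P₂ + 3P₁)`-free graph with two non-adjacent vertices `u ≠ v`, the
subgraph induced on the set `C` of (other) vertices non-adjacent to both `u` and `v`
is complete multipartite, i.e. its complement is `P₃`-free. -/
theorem induce_nonneighbors_completeMultipartite {V : Type*} (G : SimpleGraph V)
    (hfree : HFree G P2Plus3P1) (u v : V) (hne : u ≠ v) (huv : ¬ G.Adj u v) :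
    HFree ((G.induce {c : V | c ≠ u ∧ c ≠ v ∧ ¬ G.Adj u c ∧ ¬ G.Adj v c})ᶜ)
      (pathGraph 3) := by
  constructor
  intro e
  have h01 : (pathGraph 3).Adj 0 1 := by rw [pathGraph_adj] <;> omega
  have h12 : (pathGraph 3).Adj 1 2 := by rw [pathGraph_adj] <;> omega
  have h02 : ¬ (pathGraph 3).Adj 0 2 := by rw [pathGraph_adj] <;> omega
  have e01 := (compl_adj _ _ _).1 (e.map_adj_iff.2 h01)
  have e12 := (compl_adj _ _ _).1 (e.map_adj_iff.2 h12)
  obtain ⟨hau, hav, hua, hva⟩ :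
      (↑(e 0) : V) ≠ u ∧ (↑(e 0) : V) ≠ v ∧ ¬ G.Adj u ↑(e 0) ∧ ¬ G.Adj v ↑(e 0) := (e 0).2
  obtain ⟨hbu, hbv, hub, hvb⟩ :
      (↑(e 1) : V) ≠ u ∧ (↑(e 1) : V) ≠ v ∧ ¬ G.Adj u ↑(e 1) ∧ ¬ G.Adj v ↑(e 1) := (e 1).2
  obtain ⟨hcu, hcv, huc, hvc⟩ :
      (↑(e 2) : V) ≠ u ∧ (↑(e 2) : V) ≠ v ∧ ¬ G.Adj u ↑(e 2) ∧ ¬ G.Adj v ↑(e 2) := (e 2).2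
  have hab : ¬ G.Adj ↑(e 0) ↑(e 1) := fun h => e01.2 h
  have hbc : ¬ G.Adj ↑(e 1) ↑(e 2) := fun h => e12.2 h
  have haneb : (↑(e 0) : V) ≠ ↑(e 1) := fun h => e01.1 (Subtype.coe_injective h)
  have hbnec : (↑(e 1) : V) ≠ ↑(e 2) := fun h => e12.1 (Subtype.coe_injective h)
  have hac : G.Adj ↑(e 0) ↑(e 2) := by
    by_contra h
    refine h02 (e.map_adj_iff.1 ((compl_adj _ _ _).2 ⟨?_, h⟩))
    intro heq
    exact absurd (e.injective heq) (by decide)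
  have hanec : (↑(e 0) : V) ≠ ↑(e 2) := hac.ne
  refine hfree.false
    (⟨⟨Sum.elim ![↑(e 0), ↑(e 2)] ![↑(e 1), u, v], ?_⟩, ?_⟩ : P2Plus3P1 ↪g G)
  · rintro (x | x) (y | y) hxy <;> fin_cases x <;> fin_cases y <;>
      simp only [Sum.elim_inl, Sum.elim_inr, Matrix.cons_val_zero, Matrix.cons_val_one,
        Matrix.head_cons, Matrix.cons_val_two, Matrix.tail_cons, Fin.isValue] at hxy <;>
      first
        | rfl
        | (exfalso; first
            | exact hanec hxy | exact hanec hxy.symm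
            | exact haneb hxy | exact haneb hxy.symm
            | exact hbnec hxy | exact hbnec hxy.symm
            | exact hau hxy | exact hau hxy.symm
            | exact hav hxy | exact hav hxy.symm
            | exact hbu hxy | exact hbu hxy.symm
            | exact hbv hxy | exact hbv hxy.symm
            | exact hcu hxy | exact hcu hxy.symm
            | exact hcv hxy | exact hcv hxy.symm
            | exact hne hxy | exact hne hxy.symm)
  · rintro (x | x) (y | y) <;> fin_cases x <;> fin_cases y <;>
      simp only [Function.Embedding.coeFn_mk, Sum.elim_inl, Sum.elim_inr,
        Matrix.cons_val_zero, Matrix.cons_val_one, Matrix.head_cons, Matrix.cons_val_two,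
        Matrix.tail_cons, Fin.isValue, Fin.zero_eta, Fin.mk_one, Fin.reduceFinMk] <;>
      first
        | exact iff_of_true hac p2_01
        | exact iff_of_true hac.symm p2_10
        | exact iff_of_false (G.loopless.irrefl _) (P2Plus3P1.loopless.irrefl _)
        | exact iff_of_false hab (by simp [P2Plus3P1, pathGraph_adj] <;> omega)
        | exact iff_of_false (fun h => hab h.symm) (by simp [P2Plus3P1, pathGraph_adj] <;> omega)
        | exact iff_of_false hbc (by simp [P2Plus3P1, pathGraph_adj] <;> omega)
        | exact iff_of_false (fun h => hbc h.symm) (by simp [P2Plus3P1, pathGraph_adj] <;> omega)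
        | exact iff_of_false hua (by simp [P2Plus3P1, pathGraph_adj] <;> omega)
        | exact iff_of_false (fun h => hua h.symm) (by simp [P2Plus3P1, pathGraph_adj] <;> omega)
        | exact iff_of_false hva (by simp [P2Plus3P1, pathGraph_adj] <;> omega)
        | exact iff_of_false (fun h => hva h.symm) (by simp [P2Plus3P1, pathGraph_adj] <;> omega)
        | exact iff_of_false hub (by simp [P2Plus3P1, pathGraph_adj] <;> omega)
        | exact iff_of_false (fun h => hub h.symm) (by simp [P2Plus3P1, pathGraph_adj] <;> omega)
        | exact iff_of_false hvb (by simp [P2Plus3P1, pathGraph_adj] <;> omega)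
        | exact iff_of_false (fun h => hvb h.symm) (by simp [P2Plus3P1, pathGraph_adj] <;> omega)
        | exact iff_of_false huc (by simp [P2Plus3P1, pathGraph_adj] <;> omega)
        | exact iff_of_false (fun h => huc h.symm) (by simp [P2Plus3P1, pathGraph_adj] <;> omega)
        | exact iff_of_false hvc (by simp [P2Plus3P1, pathGraph_adj] <;> omega)
        | exact iff_of_false (fun h => hvc h.symm) (by simp [P2Plus3P1, pathGraph_adj] <;> omega)
        | exact iff_of_false huv (by simp [P2Plus3P1, pathGraph_adj] <;> omega)
        | exact iff_of_false (fun h => huv h.symm) (by simp [P2Plus3P1, pathGraph_adj] <;> omega)
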